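/- For the one-parameter exponential family f(x|θ) = exp[θx − ψ(θ) + h(x)] with canonical parameter θ, one has g₃(θ) = ψ'''(θ) = I′(θ), and hence the GML prior π_GML(θ) ∝ exp[(1/4)∫ I′(θ)/I(θ) dθ] = I^{1/4}(θ). -/

import Mathlib

open Real

/-- **The GML prior in the one-parameter exponential family.**
For `f(x|θ) = exp[θx - ψ(θ) + h(x)]` with canonical parameter `θ`, the Fisher
information is `I = ψ''` and `g₃ = ψ''' = I'`; hence any GML prior, i.e. any
positive `π` with `π'/π = (2g₃ - I')/(4I) = I'/(4I)`, is proportional to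
`I^{1/4}`. -/
theorem GML_prior_exponential_family
    (ψ I g₃ : ℝ → ℝ) (hψ : ContDiff ℝ 3 ψ)
    (hI : ∀ t, I t = iteratedDeriv 2 ψ t)
    (hg₃ : ∀ t, g₃ t = iteratedDeriv 3 ψ t)
    (hIpos : ∀ t, 0 < I t)
    (p : ℝ → ℝ) (hppos : ∀ t, 0 < p t) (hpdiff : Differentiable ℝ p)
    (hp : ∀ t, deriv p t / p t = (2 * g₃ t - deriv I t) / (4 * I t)) :
    (∀ t, g₃ t = deriv I t) ∧
    ∃ C : ℝ, 0 < C ∧ ∀ t, p t = C * (I t) ^ ((1 : ℝ) / 4) := by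
  have hIfun : I = iteratedDeriv 2 ψ := funext hI
  have hIdiff : Differentiable ℝ I := by
    rw [hIfun]; exact hψ.differentiable_iteratedDeriv 2 (by norm_num)
  have hdI : ∀ t, g₃ t = deriv I t := by
    intro t
    rw [hg₃, hIfun, iteratedDeriv_succ]
  refine ⟨hdI, ?_⟩
  -- the logarithmic derivative identity
  have hp' : ∀ t, deriv p t / p t = deriv I t / (4 * I t) := by
    intro t
    rw [hp t, hdI t]; ring_nf
  -- F = log p - (1/4) log I has zero derivative
  set F : ℝ → ℝ := fun t => Real.log (p t) - (1/4) * Real.log (I t) with hF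
  have hFderiv : ∀ t, HasDerivAt F 0 t := by
    intro t
    have h1 : HasDerivAt (fun t => Real.log (p t)) (deriv p t / p t) t :=
      (hpdiff t).hasDerivAt.log (hppos t).ne'
    have h2 : HasDerivAt (fun t => Real.log (I t)) (deriv I t / I t) t :=
      (hIdiff t).hasDerivAt.log (hIpos t).ne'
    have := h1.sub (h2.const_mul (1/4))
    convert this using 1
    all_goals first
      | rfl
      | (rw [hp' t]
         field_simp
         ring)
      | (rw [hp' t]
         field_simp)
  have hFdiff : Differentiable ℝ F := fun t => (hFderiv t).differentiableAt
  have hFconst : ∀ t, F t = F 0 := by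
    intro t
    exact is_const_of_deriv_eq_zero hFdiff (fun x => (hFderiv x).deriv) t 0
  refine ⟨Real.exp (F 0), Real.exp_pos _, fun t => ?_⟩
  have : p t = Real.exp (F t + (1/4) * Real.log (I t)) := by
    rw [hF]
    simp only [sub_add_cancel]
    rw [Real.exp_log (hppos t)]
  rw [this, hFconst t, Real.exp_add]
  congr 1
  rw [Real.rpow_def_of_pos (hIpos t)]
  ring_nf
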